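/- Let V be a finite face-connected set of cells in Z^d, d ≥ 2, with x ∈ B_out(V) articulate and y ∈ V face-adjacent to x with the component of y in V \ {x} disjoint from B_out(V). Then x has at most one face on the outer boundary of V, namely the face opposite the face shared with y, and x has exactly this one face on the outer boundary. -/

import Mathlib

/-- The grid graph on `ℤ^d`: cells are face-adjacent iff their centers are at distance 1. -/
def gridGraph (d : ℕ) : SimpleGraph (Fin d → ℤ) where
  Adj a b := (∑ i, |a i - b i|) = 1
  symm := by
    constructor
    intro a b h
    simpa [abs_sub_comm] using h
  loopless := by
    constructor
    intro a h
    simp at h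

/-- Reachability within a set `S` of cells via face-adjacency. -/
def ReachIn (d : ℕ) (S : Set (Fin d → ℤ)) (a b : Fin d → ℤ) : Prop :=
  Relation.ReflTransGen (fun x y => x ∈ S ∧ y ∈ S ∧ (gridGraph d).Adj x y) a b

/-- A set of cells is (face-)connected. -/
def IsConn (d : ℕ) (S : Set (Fin d → ℤ)) : Prop :=
  S.Nonempty ∧ ∀ a ∈ S, ∀ b ∈ S, ReachIn d S a b

/-- The outer boundary modules of `V`: cells of `V` face-adjacent to a cell of an
infinite face-connected component of the complement of `V`. -/
def Bout (d : ℕ) (V : Set (Fin d → ℤ)) : Set (Fin d → ℤ) :=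
  {v | v ∈ V ∧ ∃ c, c ∉ V ∧ (gridGraph d).Adj v c ∧
    Set.Infinite {b | ReachIn d Vᶜ c b}}

theorem stmt16 (d : ℕ) (hd : 2 ≤ d) (V : Set (Fin d → ℤ)) (hfin : V.Finite)
    (hconn : IsConn d V) (x : Fin d → ℤ) (hx : x ∈ Bout d V)
    (hart : ¬ IsConn d (V \ {x}))
    (y : Fin d → ℤ) (hy : y ∈ V) (hadj : (gridGraph d).Adj x y)
    (hdisj : ∀ b, ReachIn d (V \ {x}) y b → b ∉ Bout d V) :
    -- the outer-boundary faces of `x` are exactly the one opposite `y`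
    {c | c ∉ V ∧ (gridGraph d).Adj x c ∧ Set.Infinite {b | ReachIn d Vᶜ c b}} =
      {fun i => 2 * x i - y i} := by
  obtain ⟨hxV, c₀, hc₀V, hc₀adj, hc₀inf⟩ := hx
  have hyx : y ≠ x := fun h => (gridGraph d).loopless.irrefl x (h ▸ hadj)
  have hadj' : (∑ i, |x i - y i|) = 1 := hadj
  have key : ∀ c, c ∉ V → (gridGraph d).Adj x c → Set.Infinite {b | ReachIn d Vᶜ c b} →
      c = fun i => 2 * x i - y i := by
    intro c hcV hadjc hinf
    by_contra hne
    set z : Fin d → ℤ := fun i => c i + y i - x i with hz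
    have hzx : z ≠ x := by
      intro h
      apply hne
      funext i
      have := congrFun h i
      simp only [hz] at this
      linarith
    have hadjc' : (∑ i, |x i - c i|) = 1 := hadjc
    have hadj_yz : (gridGraph d).Adj y z := by
      show (∑ i, |y i - z i|) = 1
      have : ∀ i, |y i - z i| = |x i - c i| := by
        intro i
        simp only [hz]
        congr 1
        ring
      rw [Finset.sum_congr rfl fun i _ => this i]
      exact hadjc'
    have hadj_zc : (gridGraph d).Adj z c := by
      show (∑ i, |z i - c i|) = 1
      have : ∀ i, |z i - c i| = |x i - y i| := by
        intro i
        simp only [hz]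
        rw [abs_sub_comm]
        congr 1
        ring
      rw [Finset.sum_congr rfl fun i _ => this i]
      exact hadj'
    by_cases hzV : z ∈ V
    · -- z ∈ V: then z is reachable from y in V \ {x} and z ∈ Bout, contradiction
      have hreach : ReachIn d (V \ {x}) y z :=
        Relation.ReflTransGen.single ⟨⟨hy, hyx⟩, ⟨hzV, hzx⟩, hadj_yz⟩
      exact hdisj z hreach ⟨hzV, c, hcV, hadj_zc, hinf⟩
    · -- z ∉ V: then y ∈ Bout via z, contradiction with hdisj y
      have hzc : ReachIn d Vᶜ z c :=
        Relation.ReflTransGen.single ⟨hzV, hcV, hadj_zc⟩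
      have hinf' : Set.Infinite {b | ReachIn d Vᶜ z b} :=
        hinf.mono fun b hb => hzc.trans hb
      exact hdisj y Relation.ReflTransGen.refl ⟨hy, z, hzV, hadj_yz, hinf'⟩
  ext c
  constructor
  · rintro ⟨h1, h2, h3⟩
    exact key c h1 h2 h3
  · intro h
    rw [Set.mem_singleton_iff] at h
    subst h
    have h0 := key c₀ hc₀V hc₀adj hc₀inf
    exact h0 ▸ ⟨hc₀V, hc₀adj, hc₀inf⟩
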